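/- Let $S_+, S_- \subseteq \mathbb{R}^n$ be finite sets strictly separable by an affine hyperplane, and let $K = \mathrm{cone}\{(x,1): x \in S_+\} \cup \{(-y,-1): y \in S_-\}$. Then the extreme rays of $K$ are exactly the rays $\overline{(x,1)}$ for $x \in A_+^*$ and $\overline{(-y,-1)}$ for $y \in A_-^*$. -/

import Mathlib

/-- Membership in the convex cone `K` generated by `(x,1)`, `x ∈ S₊`, and `(-y,-1)`, `y ∈ S₋`. -/
def InConeK (n : ℕ) (Sp Sm : Finset (Fin n → ℝ)) (v : (Fin n → ℝ) × ℝ) : Prop :=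
  ∃ lam gam : (Fin n → ℝ) → ℝ, (∀ x, 0 ≤ lam x) ∧ (∀ y, 0 ≤ gam y) ∧
    v = ∑ x ∈ Sp, lam x • ((x, (1 : ℝ)) : (Fin n → ℝ) × ℝ) +
        ∑ y ∈ Sm, gam y • ((-y, (-1 : ℝ)) : (Fin n → ℝ) × ℝ)

/-- `v` generates an extreme ray: `v ∈ C` and any decomposition `v = v₁ + v₂` with
`v₁, v₂ ∈ C` forces `v₁, v₂` to be non-negative multiples of `v`. -/
def IsExtremeRay {V : Type*} [AddCommGroup V] [Module ℝ V] (C : V → Prop) (v : V) : Prop :=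
  C v ∧ ∀ v₁ v₂ : V, C v₁ → C v₂ → v = v₁ + v₂ →
    (∃ a : ℝ, 0 ≤ a ∧ v₁ = a • v) ∧ (∃ b : ℝ, 0 ≤ b ∧ v₂ = b • v)

/-- `x* ∈ S₊` is critical: some affine functional vanishes at `x*`, is positive on the
rest of `S₊`, and negative on `S₋`. -/
def CritPlus (n : ℕ) (Sp Sm : Finset (Fin n → ℝ)) (xs : Fin n → ℝ) : Prop :=
  xs ∈ Sp ∧ ∃ (c : Fin n → ℝ) (d : ℝ), (∑ i, c i * xs i) + d = 0 ∧
    (∀ x ∈ Sp, x ≠ xs → (∑ i, c i * x i) + d > 0) ∧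
    (∀ y ∈ Sm, (∑ i, c i * y i) + d < 0)

/-- `y* ∈ S₋` is critical (symmetric definition). -/
def CritMinus (n : ℕ) (Sp Sm : Finset (Fin n → ℝ)) (ys : Fin n → ℝ) : Prop :=
  ys ∈ Sm ∧ ∃ (c : Fin n → ℝ) (d : ℝ), (∑ i, c i * ys i) + d = 0 ∧
    (∀ y ∈ Sm, y ≠ ys → (∑ i, c i * y i) + d < 0) ∧
    (∀ x ∈ Sp, (∑ i, c i * x i) + d > 0)



section Aux
variable {n : ℕ}

/-- The affine-linear functional `(w,t) ↦ ∑ c i * w i + d * t` as a linear map. -/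
def affMap (c : Fin n → ℝ) (d : ℝ) : ((Fin n → ℝ) × ℝ) →ₗ[ℝ] ℝ where
  toFun v := (∑ i, c i * v.1 i) + d * v.2
  map_add' v w := by
    simp only [Prod.fst_add, Prod.snd_add, Pi.add_apply, mul_add, Finset.sum_add_distrib]
    ring
  map_smul' a v := by
    simp only [Prod.smul_fst, Prod.smul_snd, Pi.smul_apply, smul_eq_mul, RingHom.id_apply,
      mul_add, Finset.mul_sum]
    congr 1
    · exact Finset.sum_congr rfl fun i _ => by ring
    · ring

@[simp] lemma affMap_apply (c : Fin n → ℝ) (d : ℝ) (v : (Fin n → ℝ) × ℝ) :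
    affMap c d v = (∑ i, c i * v.1 i) + d * v.2 := rfl

/-- Every linear functional on `(Fin n → ℝ) × ℝ` is of the form `affMap c d`. -/
lemma linearMap_repr (L : ((Fin n → ℝ) × ℝ) →ₗ[ℝ] ℝ) :
    ∃ (c : Fin n → ℝ) (d : ℝ), ∀ v, L v = (∑ i, c i * v.1 i) + d * v.2 := by
  refine ⟨fun i => L (Pi.single i 1, 0), L (0, 1), fun v => ?_⟩
  have hv : v = (∑ i, v.1 i • ((Pi.single i 1 : Fin n → ℝ), (0:ℝ))) + v.2 • ((0 : Fin n → ℝ), (1:ℝ)) := by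
    apply Prod.ext
    · simp only [Prod.fst_add, Prod.fst_sum, Prod.smul_fst, Prod.smul_snd, smul_zero,
        smul_eq_mul, mul_one]
      rw [show (∑ i, v.1 i • (Pi.single i 1 : Fin n → ℝ)) = ∑ i, Pi.single i (v.1 i) from
        Finset.sum_congr rfl fun i _ => by rw [← Pi.single_smul, smul_eq_mul, mul_one]]
      rw [Finset.univ_sum_single]
      simp
    · simp [Prod.snd_sum]
  conv_lhs => rw [hv]
  rw [map_add, map_sum]
  simp only [map_smul, smul_eq_mul]
  congr 1
  · exact Finset.sum_congr rfl fun i _ => mul_comm _ _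
  · exact mul_comm _ _

/-- Membership in the cone generated by a finite set `G`. -/
def coneOf (G : Finset ((Fin n → ℝ) × ℝ)) (v : (Fin n → ℝ) × ℝ) : Prop :=
  ∃ μ : ((Fin n → ℝ) × ℝ) → ℝ, (∀ g, 0 ≤ μ g) ∧ v = ∑ g ∈ G, μ g • g

lemma coneOf_smul_gen {G : Finset ((Fin n → ℝ) × ℝ)} {g : (Fin n → ℝ) × ℝ}
    (hg : g ∈ G) {t : ℝ} (ht : 0 ≤ t) : coneOf G (t • g) := by
  classical
  refine ⟨fun h => if h = g then t else 0, fun h => by by_cases hh : h = g <;> simp [hh, ht], ?_⟩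
  rw [Finset.sum_eq_single_of_mem g hg (fun b _ hb => by simp [hb])]
  simp

lemma coneOf_zero {G : Finset ((Fin n → ℝ) × ℝ)} : coneOf G 0 :=
  ⟨0, fun _ => le_refl 0, by simp⟩

lemma coneOf_add {G : Finset ((Fin n → ℝ) × ℝ)} {v w : (Fin n → ℝ) × ℝ}
    (hv : coneOf G v) (hw : coneOf G w) : coneOf G (v + w) := by
  obtain ⟨μ, hμ, rfl⟩ := hv
  obtain ⟨ν, hν, rfl⟩ := hw
  exact ⟨μ + ν, fun g => add_nonneg (hμ g) (hν g), by
    rw [← Finset.sum_add_distrib]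
    exact Finset.sum_congr rfl fun g _ => by simp [add_smul]⟩

lemma coneOf_sum {G : Finset ((Fin n → ℝ) × ℝ)} {ι : Type*} {s : Finset ι}
    {f : ι → (Fin n → ℝ) × ℝ} (h : ∀ i ∈ s, coneOf G (f i)) : coneOf G (∑ i ∈ s, f i) :=
  Finset.sum_induction f _ (fun _ _ => coneOf_add) coneOf_zero h

lemma psi_nonneg_on_cone {G : Finset ((Fin n → ℝ) × ℝ)} {ψ : ((Fin n → ℝ) × ℝ) →ₗ[ℝ] ℝ}
    (hψ : ∀ g ∈ G, 0 ≤ ψ g) {v : (Fin n → ℝ) × ℝ} (hv : coneOf G v) : 0 ≤ ψ v := by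
  obtain ⟨μ, hμ, rfl⟩ := hv
  rw [map_sum]
  exact Finset.sum_nonneg fun g hg => by
    rw [map_smul, smul_eq_mul]; exact mul_nonneg (hμ g) (hψ g hg)

end Aux

section Master
variable {n : ℕ}

/-- If a linear functional vanishes exactly at `g₀` among `G` (positive elsewhere on `G`),
then `l • g₀` spans an extreme ray of the cone. -/
lemma extreme_of_psi {G : Finset ((Fin n → ℝ) × ℝ)} (ψ : ((Fin n → ℝ) × ℝ) →ₗ[ℝ] ℝ)
    {g₀ : (Fin n → ℝ) × ℝ} (hg₀ : g₀ ∈ G) (hg₀0 : g₀ ≠ 0) (hψg₀ : ψ g₀ = 0)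
    (hψpos : ∀ g ∈ G, g ≠ g₀ → 0 < ψ g) {l : ℝ} (hl : 0 < l) :
    IsExtremeRay (coneOf G) (l • g₀) := by
  classical
  have hψ0 : ∀ g ∈ G, 0 ≤ ψ g := fun g hg => by
    by_cases h : g = g₀
    · rw [h, hψg₀]
    · exact (hψpos g hg h).le
  have key : ∀ w, coneOf G w → ψ w = 0 → ∃ a : ℝ, 0 ≤ a ∧ w = a • (l • g₀) := by
    rintro w ⟨μ, hμ, rfl⟩ hw0
    rw [map_sum] at hw0
    have hterm : ∀ g ∈ G, μ g * ψ g = 0 := by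
      rw [← Finset.sum_eq_zero_iff_of_nonneg
        (fun g hg => mul_nonneg (hμ g) (hψ0 g hg))]
      simpa [smul_eq_mul] using hw0
    have hzero : ∀ g ∈ G, g ≠ g₀ → μ g • g = 0 := by
      intro g hg hne
      have := hterm g hg
      have hμg : μ g = 0 := by
        rcases mul_eq_zero.mp this with h | h
        · exact h
        · exact absurd h (hψpos g hg hne).ne'
      rw [hμg, zero_smul]
    rw [Finset.sum_eq_single_of_mem g₀ hg₀ hzero]
    exact ⟨μ g₀ / l, div_nonneg (hμ g₀) hl.le, by
      rw [smul_smul, div_mul_cancel₀ _ hl.ne']⟩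
  refine ⟨coneOf_smul_gen hg₀ hl.le, fun v₁ v₂ h₁ h₂ hsum => ?_⟩
  have h1 : 0 ≤ ψ v₁ := psi_nonneg_on_cone hψ0 h₁
  have h2 : 0 ≤ ψ v₂ := psi_nonneg_on_cone hψ0 h₂
  have hsum0 : ψ v₁ + ψ v₂ = 0 := by
    rw [← map_add, ← hsum, map_smul, hψg₀, smul_zero]
  exact ⟨key v₁ h₁ (by linarith), key v₂ h₂ (by linarith)⟩

lemma gen_ne_zero {G : Finset ((Fin n → ℝ) × ℝ)} (htwo : ∀ g ∈ G, g.2 = 1 ∨ g.2 = -1)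
    {g : (Fin n → ℝ) × ℝ} (hg : g ∈ G) : g ≠ 0 := by
  intro h
  rcases htwo g hg with h2 | h2 <;> rw [h] at h2 <;> norm_num at h2

lemma parallel_eq {G : Finset ((Fin n → ℝ) × ℝ)} (htwo : ∀ g ∈ G, g.2 = 1 ∨ g.2 = -1)
    {g₀ g₁ : (Fin n → ℝ) × ℝ} (h₀ : g₀ ∈ G) (h₁ : g₁ ∈ G) {r : ℝ} (hr : 0 < r)
    (h : g₁ = r • g₀) : g₁ = g₀ := by
  have h2 : g₁.2 = r * g₀.2 := by rw [h]; rfl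
  have hr1 : r = 1 := by
    rcases htwo g₀ h₀ with ha | ha <;> rcases htwo g₁ h₁ with hb | hb <;>
      rw [ha, hb] at h2 <;> nlinarith
  rw [h, hr1, one_smul]

/-- Strip a positive multiple of a generator from a decomposition of an extreme ray. -/
lemma extract_dir {G : Finset ((Fin n → ℝ) × ℝ)} {v : (Fin n → ℝ) × ℝ}
    (hext : IsExtremeRay (coneOf G) v) {gs rest : (Fin n → ℝ) × ℝ} {t : ℝ}
    (hgc : coneOf G (t • gs)) (hgnz : gs ≠ 0) (ht : 0 < t)
    (hrest : coneOf G rest) (hdecomp : v = t • gs + rest) :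
    ∃ r : ℝ, 0 < r ∧ v = r • gs := by
  obtain ⟨⟨a, ha, hav⟩, -⟩ := hext.2 _ _ hgc hrest hdecomp
  have ha' : a ≠ 0 := by
    rintro rfl
    rw [zero_smul] at hav
    rcases smul_eq_zero.mp hav with h | h
    · exact ht.ne' h
    · exact hgnz h
  have hapos : 0 < a := lt_of_le_of_ne ha (Ne.symm ha')
  refine ⟨t / a, div_pos ht hapos, ?_⟩
  have : v = a⁻¹ • (t • gs) := by
    rw [hav, smul_smul, inv_mul_cancel₀ ha', one_smul]
  rw [this, smul_smul, div_eq_inv_mul]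

end Master
section LemB
variable {n : ℕ}

lemma exists_psi_of_extreme {G : Finset ((Fin n → ℝ) × ℝ)}
    (htwo : ∀ g ∈ G, g.2 = 1 ∨ g.2 = -1)
    {c : Fin n → ℝ} {d : ℝ} (hφ : ∀ g ∈ G, 0 < affMap c d g)
    {v : (Fin n → ℝ) × ℝ} (hv : v ≠ 0) (hext : IsExtremeRay (coneOf G) v) :
    ∃ g₀ ∈ G, ∃ l : ℝ, 0 < l ∧ v = l • g₀ ∧
      ∃ ψ : ((Fin n → ℝ) × ℝ) →ₗ[ℝ] ℝ, ψ g₀ = 0 ∧ ∀ g ∈ G, g ≠ g₀ → 0 < ψ g := by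
  classical
  -- Step 1: v is a positive multiple of a generator
  obtain ⟨μ, hμ, hrepr⟩ := hext.1
  have hex : ∃ g ∈ G, μ g ≠ 0 := by
    by_contra h
    push_neg at h
    exact hv (by rw [hrepr]; exact Finset.sum_eq_zero fun g hg => by rw [h g hg, zero_smul])
  obtain ⟨gs, hgs, hμgs⟩ := hex
  have hμgs' : 0 < μ gs := lt_of_le_of_ne (hμ gs) (Ne.symm hμgs)
  have hdecomp : v = μ gs • gs + ∑ g ∈ G.erase gs, μ g • g := by
    rw [hrepr]; exact (Finset.add_sum_erase _ _ hgs).symm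
  obtain ⟨l, hl, hvl⟩ := extract_dir hext (coneOf_smul_gen hgs (hμ gs))
    (gen_ne_zero htwo hgs) hμgs'
    (coneOf_sum fun g hg => coneOf_smul_gen (Finset.mem_of_mem_erase hg) (hμ g)) hdecomp
  refine ⟨gs, hgs, l, hl, hvl, ?_⟩
  set g₀ := gs
  -- Step 2: separation
  set φ := affMap c d with hφdef
  have hφ₀ : 0 < φ g₀ := hφ g₀ hgs
  set pf : ((Fin n → ℝ) × ℝ) → ((Fin n → ℝ) × ℝ) := fun g => (φ g)⁻¹ • g with hpf
  set P : Finset ((Fin n → ℝ) × ℝ) := (G.erase g₀).image pf with hP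
  set vstar : (Fin n → ℝ) × ℝ := (φ g₀)⁻¹ • g₀ with hvstar
  have hg₀vstar : g₀ = φ g₀ • vstar := (smul_inv_smul₀ hφ₀.ne' g₀).symm
  have hnot : vstar ∉ convexHull ℝ (↑P : Set ((Fin n → ℝ) × ℝ)) := by
    intro hmem
    rw [Finset.convexHull_eq] at hmem
    obtain ⟨w, hw0, hw1, hwc⟩ := hmem
    rw [Finset.centerMass_eq_of_sum_1 _ _ hw1] at hwc
    have hexp : ∃ p ∈ P, w p ≠ 0 := by
      by_contra h
      push_neg at h
      rw [Finset.sum_eq_zero h] at hw1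
      norm_num at hw1
    obtain ⟨ps, hps, hwps⟩ := hexp
    have hwps' : 0 < w ps := lt_of_le_of_ne (hw0 ps hps) (Ne.symm hwps)
    obtain ⟨g₁, hg₁, hpsg₁⟩ := Finset.mem_image.mp hps
    have hg₁G : g₁ ∈ G := Finset.mem_of_mem_erase hg₁
    have hφ₁ : 0 < φ g₁ := hφ g₁ hg₁G
    set s := l * φ g₀ with hs
    have hspos : 0 < s := mul_pos hl hφ₀
    have hvs : v = ∑ p ∈ P, (s * w p) • p := by
      calc v = s • vstar := by
              rw [hvl, hvstar, smul_smul, hs, mul_assoc, mul_inv_cancel₀ hφ₀.ne', mul_one]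
        _ = s • ∑ i ∈ P, w i • id i := by rw [hwc]
        _ = ∑ p ∈ P, (s * w p) • p := by
              rw [Finset.smul_sum]
              exact Finset.sum_congr rfl fun p _ => by rw [smul_smul, id]
    have hdec2 : v = (s * w ps) • ps + ∑ p ∈ P.erase ps, (s * w p) • p := by
      rw [hvs]; exact (Finset.add_sum_erase _ _ hps).symm
    have hps_eq : (s * w ps) • ps = (s * w ps * (φ g₁)⁻¹) • g₁ := by
      rw [← hpsg₁]; rw [hpf]; simp only [smul_smul]
    have htpos : 0 < s * w ps * (φ g₁)⁻¹ := by positivity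
    have hrest : coneOf G (∑ p ∈ P.erase ps, (s * w p) • p) := by
      refine coneOf_sum fun p hp => ?_
      have hpP : p ∈ P := Finset.mem_of_mem_erase hp
      obtain ⟨g, hg, hpg⟩ := Finset.mem_image.mp hpP
      have : (s * w p) • p = (s * w p * (φ g)⁻¹) • g := by
        rw [← hpg]; simp only [pf, smul_smul]
      rw [this]
      exact coneOf_smul_gen (Finset.mem_of_mem_erase hg)
        (mul_nonneg (mul_nonneg hspos.le (hw0 p hpP)) (inv_nonneg.mpr (hφ g (Finset.mem_of_mem_erase hg)).le))
    rw [hps_eq] at hdec2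
    obtain ⟨r, hr, hvr⟩ := extract_dir hext
      (coneOf_smul_gen hg₁G htpos.le) (gen_ne_zero htwo hg₁G) htpos hrest hdec2
    -- v = r • g₁ and v = l • g₀ with r, l > 0 ⟹ g₁ = g₀, contradiction
    have hg₁g₀ : g₁ = (l / r) • g₀ := by
      have : r • g₁ = l • g₀ := by rw [← hvr, hvl]
      have h2 : g₁ = r⁻¹ • (l • g₀) := by
        rw [← this, smul_smul, inv_mul_cancel₀ hr.ne', one_smul]
      rw [h2, smul_smul, div_eq_inv_mul]
    have := parallel_eq htwo hgs hg₁G (div_pos hl hr) hg₁g₀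
    exact (Finset.ne_of_mem_erase hg₁) this
  -- Hahn–Banach separation
  have hconv : Convex ℝ (convexHull ℝ (↑P : Set ((Fin n → ℝ) × ℝ))) := convex_convexHull ℝ _
  have hclosed : IsClosed (convexHull ℝ (↑P : Set ((Fin n → ℝ) × ℝ))) :=
    (P.finite_toSet.isCompact_convexHull (𝕜 := ℝ)).isClosed
  obtain ⟨f, u, hfu, hufv⟩ := geometric_hahn_banach_closed_point hconv hclosed hnot
  refine ⟨(f vstar) • φ - (f : ((Fin n → ℝ) × ℝ) →ₗ[ℝ] ℝ), ?_, ?_⟩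
  · have : f g₀ = φ g₀ * f vstar := by
      conv_lhs => rw [hg₀vstar]
      rw [map_smul, smul_eq_mul]
    simp only [LinearMap.sub_apply, LinearMap.smul_apply, smul_eq_mul,
      ContinuousLinearMap.coe_coe, this]
    ring
  · intro g hg hne
    have hgE : g ∈ G.erase g₀ := Finset.mem_erase.mpr ⟨hne, hg⟩
    have hφg : 0 < φ g := hφ g hg
    have hpg : pf g ∈ P := Finset.mem_image_of_mem pf hgE
    have hfpg : f (pf g) < u := hfu _ (subset_convexHull ℝ _ hpg)
    have hfg : f g = φ g * f (pf g) := by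
      conv_lhs => rw [show g = φ g • pf g from (smul_inv_smul₀ hφg.ne' g).symm]
      rw [map_smul, smul_eq_mul]
    simp only [LinearMap.sub_apply, LinearMap.smul_apply, smul_eq_mul,
      ContinuousLinearMap.coe_coe, hfg]
    nlinarith
end LemB
section Bridge
variable {n : ℕ}

noncomputable def gensOf (Sp Sm : Finset (Fin n → ℝ)) : Finset ((Fin n → ℝ) × ℝ) :=
  Sp.image (fun x => (x, (1:ℝ))) ∪ Sm.image (fun y => (-y, (-1:ℝ)))

lemma mem_gensOf {Sp Sm : Finset (Fin n → ℝ)} {g : (Fin n → ℝ) × ℝ} :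
    g ∈ gensOf Sp Sm ↔ (∃ x ∈ Sp, g = (x, (1:ℝ))) ∨ (∃ y ∈ Sm, g = (-y, (-1:ℝ))) := by
  simp [gensOf, eq_comm]

lemma sum_gensOf (Sp Sm : Finset (Fin n → ℝ)) (μ : ((Fin n → ℝ) × ℝ) → ℝ) :
    ∑ g ∈ gensOf Sp Sm, μ g • g =
      ∑ x ∈ Sp, μ (x, (1:ℝ)) • ((x, (1:ℝ)) : (Fin n → ℝ) × ℝ) +
      ∑ y ∈ Sm, μ (-y, (-1:ℝ)) • ((-y, (-1:ℝ)) : (Fin n → ℝ) × ℝ) := by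
  rw [gensOf, Finset.sum_union, Finset.sum_image, Finset.sum_image]
  · intro y _ y' _ h
    have := congrArg Prod.fst h
    simpa using this
  · intro x _ x' _ h
    exact congrArg Prod.fst h
  · rw [Finset.disjoint_left]
    rintro a ha hb
    obtain ⟨x, -, rfl⟩ := Finset.mem_image.mp ha
    obtain ⟨y, -, h⟩ := Finset.mem_image.mp hb
    have := congrArg Prod.snd h
    norm_num at this

lemma inConeK_iff {Sp Sm : Finset (Fin n → ℝ)} {v : (Fin n → ℝ) × ℝ} :
    InConeK n Sp Sm v ↔ coneOf (gensOf Sp Sm) v := by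
  classical
  constructor
  · rintro ⟨lam, gam, hl, hg, rfl⟩
    refine ⟨fun g => if g.2 = 1 then lam g.1 else gam (-g.1), fun g => ?_, ?_⟩
    · by_cases h : g.2 = 1 <;> simp [h, hl, hg]
    · rw [sum_gensOf]
      congr 1
      · exact Finset.sum_congr rfl fun x _ => by norm_num
      · exact Finset.sum_congr rfl fun y _ => by norm_num
  · rintro ⟨μ, hμ, rfl⟩
    exact ⟨fun x => μ (x, 1), fun y => μ (-y, -1), fun x => hμ _, fun y => hμ _,
      sum_gensOf Sp Sm μ⟩

lemma isExtremeRay_congr {C C' : ((Fin n → ℝ) × ℝ) → Prop} (h : ∀ w, C w ↔ C' w)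
    (v : (Fin n → ℝ) × ℝ) : IsExtremeRay C v ↔ IsExtremeRay C' v := by
  have hCC : C = C' := funext fun w => propext (h w)
  rw [hCC]

end Bridge
theorem stmt4 (n : ℕ) (Sp Sm : Finset (Fin n → ℝ))
    (hsep : ∃ (c : Fin n → ℝ) (d : ℝ),
      (∀ x ∈ Sp, (∑ i, c i * x i) + d > 0) ∧ (∀ y ∈ Sm, (∑ i, c i * y i) + d < 0)) :
    ∀ v : (Fin n → ℝ) × ℝ, v ≠ 0 →
      (IsExtremeRay (InConeK n Sp Sm) v ↔
        ∃ l : ℝ, 0 < l ∧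
          ((∃ x, CritPlus n Sp Sm x ∧ v = l • ((x, (1 : ℝ)) : (Fin n → ℝ) × ℝ)) ∨
           (∃ y, CritMinus n Sp Sm y ∧ v = l • ((-y, (-1 : ℝ)) : (Fin n → ℝ) × ℝ)))) := by
  classical
  obtain ⟨c, d, hcp, hcm⟩ := hsep
  intro v hv
  rw [isExtremeRay_congr (fun w => inConeK_iff) v]
  have htwo : ∀ g ∈ gensOf Sp Sm, g.2 = 1 ∨ g.2 = -1 := by
    intro g hg
    rcases mem_gensOf.mp hg with ⟨x, _, rfl⟩ | ⟨y, _, rfl⟩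
    · left; rfl
    · right; rfl
  have hφ : ∀ g ∈ gensOf Sp Sm, 0 < affMap c d g := by
    intro g hg
    rcases mem_gensOf.mp hg with ⟨x, hx, rfl⟩ | ⟨y, hy, rfl⟩
    · simpa using hcp x hx
    · have := hcm y hy
      simp only [affMap_apply, Pi.neg_apply, mul_neg, Finset.sum_neg_distrib]
      linarith
  constructor
  · -- forward: extreme ray ⟹ critical generator
    intro hext
    obtain ⟨g₀, hg₀, l, hl, hvl, ψ, hψ0, hψpos⟩ := exists_psi_of_extreme htwo hφ hv hext
    obtain ⟨c', d', hrepr⟩ := linearMap_repr ψ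
    refine ⟨l, hl, ?_⟩
    rcases mem_gensOf.mp hg₀ with ⟨x₀, hx₀, rfl⟩ | ⟨y₀, hy₀, rfl⟩
    · left
      refine ⟨x₀, ⟨hx₀, c', d', ?_, ?_, ?_⟩, hvl⟩
      · rw [hrepr] at hψ0; simpa using hψ0
      · intro x hx hne
        have hgmem : ((x, (1:ℝ)) : (Fin n → ℝ) × ℝ) ∈ gensOf Sp Sm :=
          mem_gensOf.mpr (Or.inl ⟨x, hx, rfl⟩)
        have hne' : ((x, (1:ℝ)) : (Fin n → ℝ) × ℝ) ≠ (x₀, (1:ℝ)) := by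
          intro h; exact hne (congrArg Prod.fst h)
        have := hψpos _ hgmem hne'
        rw [hrepr] at this; simpa using this
      · intro y hy
        have hgmem : ((-y, (-1:ℝ)) : (Fin n → ℝ) × ℝ) ∈ gensOf Sp Sm :=
          mem_gensOf.mpr (Or.inr ⟨y, hy, rfl⟩)
        have hne' : ((-y, (-1:ℝ)) : (Fin n → ℝ) × ℝ) ≠ (x₀, (1:ℝ)) := by
          intro h; have := congrArg Prod.snd h; norm_num at this
        have := hψpos _ hgmem hne'
        rw [hrepr] at this
        simp only [Pi.neg_apply, mul_neg, Finset.sum_neg_distrib] at this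
        linarith
    · right
      refine ⟨y₀, ⟨hy₀, c', d', ?_, ?_, ?_⟩, hvl⟩
      · rw [hrepr] at hψ0
        simp only [Pi.neg_apply, mul_neg, Finset.sum_neg_distrib] at hψ0
        linarith
      · intro y hy hne
        have hgmem : ((-y, (-1:ℝ)) : (Fin n → ℝ) × ℝ) ∈ gensOf Sp Sm :=
          mem_gensOf.mpr (Or.inr ⟨y, hy, rfl⟩)
        have hne' : ((-y, (-1:ℝ)) : (Fin n → ℝ) × ℝ) ≠ (-y₀, (-1:ℝ)) := by
          intro h
          exact hne (neg_injective (congrArg Prod.fst h))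
        have := hψpos _ hgmem hne'
        rw [hrepr] at this
        simp only [Pi.neg_apply, mul_neg, Finset.sum_neg_distrib] at this
        linarith
      · intro x hx
        have hgmem : ((x, (1:ℝ)) : (Fin n → ℝ) × ℝ) ∈ gensOf Sp Sm :=
          mem_gensOf.mpr (Or.inl ⟨x, hx, rfl⟩)
        have hne' : ((x, (1:ℝ)) : (Fin n → ℝ) × ℝ) ≠ (-y₀, (-1:ℝ)) := by
          intro h; have := congrArg Prod.snd h; norm_num at this
        have := hψpos _ hgmem hne'
        rw [hrepr] at this; simpa using this
  · -- backward: critical generator ⟹ extreme ray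
    rintro ⟨l, hl, ⟨xs, ⟨hxs, c', d', h0, hpos, hneg⟩, rfl⟩ |
      ⟨ys, ⟨hys, c', d', h0, hneg, hpos⟩, rfl⟩⟩
    · refine extreme_of_psi (affMap c' d') (mem_gensOf.mpr (Or.inl ⟨xs, hxs, rfl⟩))
        (fun h => by have := congrArg Prod.snd h; norm_num at this)
        (by simpa using h0) ?_ hl
      intro g hg hne
      rcases mem_gensOf.mp hg with ⟨x, hx, rfl⟩ | ⟨y, hy, rfl⟩
      · have hxne : x ≠ xs := fun h => hne (by rw [h])
        simpa using hpos x hx hxne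
      · have := hneg y hy
        simp only [affMap_apply, Pi.neg_apply, mul_neg, Finset.sum_neg_distrib]
        linarith
    · refine extreme_of_psi (affMap c' d') (mem_gensOf.mpr (Or.inr ⟨ys, hys, rfl⟩))
        (fun h => by have := congrArg Prod.snd h; norm_num at this)
        ?_ ?_ hl
      · simp only [affMap_apply, Pi.neg_apply, mul_neg, Finset.sum_neg_distrib]
        linarith
      intro g hg hne
      rcases mem_gensOf.mp hg with ⟨x, hx, rfl⟩ | ⟨y, hy, rfl⟩
      · simpa using hpos x hx
      · have hyne : y ≠ ys := fun h => hne (by rw [h])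
        have := hneg y hy hyne
        simp only [affMap_apply, Pi.neg_apply, mul_neg, Finset.sum_neg_distrib]
        linarith
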